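/- Let ψ be a morphism from (k((G₁)),l₁) to (k((G₂)),l₂), and let G₁^#, G₂^# be the exponential extension groups with embeddings ι₁, ι₂ and sections l₁^#, l₂^#. Define ψ^# : G₁^# → G₂^# by ψ^#(e(α)) := e(ψ(α)) for α ∈ k((G₁^{>1})). Then ψ^# is an order-preserving group embedding which extends ψ (ψ^# ∘ ι₁ = ι₂ ∘ ψ on G₁), and ψ^# is a morphism from (k((G₁^#)),l₁^#) to (k((G₂^#)),l₂^#): the canonical extension of ψ^# to k((G₁^#)) satisfies (canonical extension of ψ^#) ∘ l₁^# = l₂^# ∘ ψ^# on G₁^#. -/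

import Mathlib

/-! Common framework: fields of generalized power series `k((G))` over a multiplicative
linearly ordered abelian group `G`, realized as Mathlib Hahn series over the additive
order-dual of `G` (so that anti well-ordered supports in `G` become partially
well-ordered supports), with the anti-lexicographic order. -/

noncomputable section
open HahnSeries
open scoped Classical

/-- The additive order-dual copy of the multiplicative group `G`:
anti well-ordered subsets of `G` correspond to well-ordered subsets of `gdual G`. -/
abbrev gdual (G : Type*) [CommGroup G] [LinearOrder G] [IsOrderedMonoid G] : Type _ := Additive Gᵒᵈ

/-- View an element of `G` as an exponent (element of `gdual G`). -/
def toGd {G : Type*} [CommGroup G] [LinearOrder G] [IsOrderedMonoid G] (g : G) : gdual G :=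
  Additive.ofMul (OrderDual.toDual g)

/-- View an exponent (element of `gdual G`) as an element of `G`. -/
def toG {G : Type*} [CommGroup G] [LinearOrder G] [IsOrderedMonoid G] (γ : gdual G) : G :=
  OrderDual.ofDual (Additive.toMul γ)

section HahnOrder

variable {k : Type*} [Field k] [LinearOrder k] [IsStrictOrderedRing k] {Γ' : Type*} [LinearOrder Γ']

theorem hahn_leadingCoeff_neg (x : HahnSeries Γ' k) : (-x).leadingCoeff = -x.leadingCoeff := by
  exact HahnSeries.leadingCoeff_neg

theorem hahn_leadingCoeff_add_pos {a b : HahnSeries Γ' k}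
    (ha : 0 < a.leadingCoeff) (hb : 0 < b.leadingCoeff) : 0 < (a + b).leadingCoeff := by
  have ha' : (0 : Lex (HahnSeries Γ' k)) < toLex a := HahnSeries.leadingCoeff_pos_iff.1 ha
  have hb' : (0 : Lex (HahnSeries Γ' k)) < toLex b := HahnSeries.leadingCoeff_pos_iff.1 hb
  exact HahnSeries.leadingCoeff_pos_iff.2 (add_pos ha' hb')

/-- The anti-lexicographic linear order on generalized power series:
`x` is positive iff its leading coefficient (the coefficient at the valuation `v x`,
i.e. at the largest element of the support) is positive. -/
instance instHahnLinearOrder : LinearOrder (HahnSeries Γ' k) where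
  le x y := x = y ∨ 0 < (y - x).leadingCoeff
  lt x y := 0 < (y - x).leadingCoeff
  le_refl x := Or.inl rfl
  le_trans x y z hxy hyz := by
    rcases hxy with rfl | hxy
    · exact hyz
    rcases hyz with rfl | hyz
    · exact Or.inr hxy
    · refine Or.inr ?_
      have := hahn_leadingCoeff_add_pos hyz hxy
      rwa [sub_add_sub_cancel] at this
  le_antisymm x y hxy hyx := by
    rcases hxy with rfl | hxy
    · rfl
    rcases hyx with rfl | hyx
    · rfl
    · exfalso
      have h1 : (x - y).leadingCoeff = -(y - x).leadingCoeff := by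
        rw [← hahn_leadingCoeff_neg, neg_sub]
      rw [h1] at hyx
      exact absurd hxy (not_lt.2 (le_of_lt (neg_pos.1 hyx)))
  lt_iff_le_not_ge x y := by
    constructor
    · intro h
      refine ⟨Or.inr h, ?_⟩
      rintro (rfl | h')
      · change 0 < (y - y).leadingCoeff at h
        rw [sub_self] at h
        simp at h
      · have h1 : (x - y).leadingCoeff = -(y - x).leadingCoeff := by
          rw [← hahn_leadingCoeff_neg, neg_sub]
        rw [h1] at h'
        exact absurd h (not_lt.2 (le_of_lt (neg_pos.1 h')))
    · rintro ⟨hle, hnot⟩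
      rcases hle with rfl | h
      · exact absurd (Or.inl rfl) hnot
      · exact h
  le_total x y := by
    by_cases h : x = y
    · exact Or.inl (Or.inl h)
    · have h0 : y - x ≠ 0 := sub_ne_zero.2 (Ne.symm h)
      have hlc : (y - x).leadingCoeff ≠ 0 := HahnSeries.leadingCoeff_ne_zero.2 h0
      rcases lt_or_gt_of_ne hlc with hneg | hpos
      · refine Or.inr (Or.inr ?_)
        rw [show x - y = -(y - x) from (neg_sub y x).symm, hahn_leadingCoeff_neg]
        exact neg_pos.2 hneg
      · exact Or.inl (Or.inr hpos)
  toDecidableLE := fun _ _ => Classical.dec _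

/-- With the anti-lexicographic order, `k((G))` is a linearly ordered abelian group. -/
instance instHahnLOACG : IsOrderedAddMonoid (HahnSeries Γ' k) where
  add_le_add_left := by
    intro x y hxy c
    rcases hxy with rfl | h
    · exact le_refl _
    · exact Or.inr (by rwa [add_sub_add_right_eq_sub])

theorem hahn_lt_iff (x y : HahnSeries Γ' k) : x < y ↔ 0 < (y - x).leadingCoeff := Iff.rfl

theorem hahn_single_pos (a : Γ') : (0 : HahnSeries Γ' k) < HahnSeries.single a 1 := by
  rw [hahn_lt_iff, sub_zero, HahnSeries.leadingCoeff_of_single]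
  exact one_pos

theorem hahn_single_lt_single {a b : Γ'} (hab : b < a) :
    (HahnSeries.single a 1 : HahnSeries Γ' k) < HahnSeries.single b 1 := by
  rw [hahn_lt_iff]
  set δ : HahnSeries Γ' k := HahnSeries.single b 1 - HahnSeries.single a 1 with hδdef
  have hne : b ≠ a := ne_of_lt hab
  have hb : δ.coeff b = 1 := by
    rw [hδdef, HahnSeries.coeff_sub, HahnSeries.coeff_single_same,
      HahnSeries.coeff_single_of_ne hne, sub_zero]
  have hbmem : b ∈ δ.support := by rw [HahnSeries.mem_support, hb]; exact one_ne_zero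
  have hδ : δ ≠ 0 := HahnSeries.support_nonempty_iff.1 ⟨b, hbmem⟩
  have hsub : δ.support ⊆ {b, a} := by
    intro γ hγ
    rw [HahnSeries.mem_support] at hγ
    by_contra hγ'
    simp only [Set.mem_insert_iff, Set.mem_singleton_iff, not_or] at hγ'
    apply hγ
    rw [hδdef, HahnSeries.coeff_sub, HahnSeries.coeff_single_of_ne hγ'.1,
      HahnSeries.coeff_single_of_ne hγ'.2, sub_zero]
  have hmin : δ.isWF_support.min (HahnSeries.support_nonempty_iff.2 hδ) = b := by
    have hmem := δ.isWF_support.min_mem (HahnSeries.support_nonempty_iff.2 hδ)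
    have hle := δ.isWF_support.min_le (HahnSeries.support_nonempty_iff.2 hδ) hbmem
    rcases hsub hmem with h | h
    · exact h
    · exact absurd (h ▸ hle) (not_le.2 hab)
  have hot : δ.orderTop = (b : WithTop Γ') := by rw [HahnSeries.orderTop, dif_neg hδ, hmin]
  rw [HahnSeries.leadingCoeff_of_ne_zero hδ, (WithTop.untop_eq_iff _).2 hot, hb]
  exact one_pos

end HahnOrder

section Series

variable {k : Type*} [Field k] [LinearOrder k] [IsStrictOrderedRing k] {G : Type*} [CommGroup G] [LinearOrder G] [IsOrderedMonoid G]

/-- The summable family `n ↦ (-1)^n/(n+1) • ε^(n+1)` (`ε` of positive order). -/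
def logFamily (ε : HahnSeries (gdual G) k) (hε : 0 < ε.orderTop) :
    HahnSeries.SummableFamily (gdual G) k ℕ where
  toFun n := ((-1 : k) ^ n / ((n : k) + 1)) • ε ^ (n + 1)
  isPWO_iUnion_support' := by
    refine ((HahnSeries.SummableFamily.powers ε).isPWO_iUnion_support).mono ?_
    intro γ hγ
    rw [Set.mem_iUnion] at hγ ⊢
    obtain ⟨n, hn⟩ := hγ
    refine ⟨n + 1, ?_⟩
    rw [HahnSeries.mem_support] at hn ⊢
    intro h
    apply hn
    show (((-1 : k) ^ n / ((n : k) + 1)) • ε ^ (n + 1)).coeff γ = 0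
    rw [HahnSeries.coeff_smul]
    show ((-1 : k) ^ n / ((n : k) + 1)) • (ε ^ (n + 1)).coeff γ = 0
    rw [show (ε ^ (n + 1)).coeff γ = 0 by simpa [hε] using h, smul_zero]
  finite_co_support' g := by
    have h := (HahnSeries.SummableFamily.powers ε).finite_co_support g
    refine Set.Finite.subset (h.preimage (Set.injOn_of_injective Nat.succ_injective)) ?_
    intro n hn
    simp only [Set.mem_preimage, Set.mem_setOf_eq] at hn ⊢
    intro h0
    apply hn
    show (((-1 : k) ^ n / ((n : k) + 1)) • ε ^ (n + 1)).coeff g = 0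
    rw [HahnSeries.coeff_smul]
    have : ((HahnSeries.SummableFamily.powers ε) (Nat.succ n)).coeff g = 0 := h0
    rw [show (ε ^ (n + 1)).coeff g = 0 by simpa [hε] using this, smul_zero]

/-- The logarithm on 1-units: `1 + ε ↦ Σ_{i ≥ 1} (-1)^(i-1) ε^i / i`
(for `ε` supported on `G^{<1}`; junk value `0` otherwise). -/
def logOneUnit (ε : HahnSeries (gdual G) k) : HahnSeries (gdual G) k :=
  if hε : 0 < ε.orderTop then (logFamily ε hε).hsum else 0

/-- The canonical extension of an order-preserving embedding `ψ : G₁ → G₂` to the fields of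
generalized power series, applying `ψ` to every monomial (junk value `0` if `ψ` is not
order-preserving). -/
def extMap {k : Type*} [Field k] [LinearOrder k] [IsStrictOrderedRing k] {G₁ G₂ : Type*} [CommGroup G₁] [LinearOrder G₁] [IsOrderedMonoid G₁]
    [CommGroup G₂] [LinearOrder G₂] [IsOrderedMonoid G₂] (ψ : G₁ → G₂) :
    HahnSeries (gdual G₁) k → HahnSeries (gdual G₂) k :=
  if h : StrictMono ψ then
    HahnSeries.embDomain
      (OrderEmbedding.ofStrictMono (fun γ => toGd (ψ (toG γ)))
        (fun a b hab => show toGd (ψ (toG a)) < toGd (ψ (toG b)) from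
          h (show toG b < toG a from hab)))
  else fun _ => 0

/-- The additive subgroup `k((G^{>1}))` of the series supported on `G^{>1}`. -/
def largeSeries (k : Type*) [Field k] [LinearOrder k] [IsStrictOrderedRing k] (G : Type*) [CommGroup G] [LinearOrder G] [IsOrderedMonoid G] :
    AddSubgroup (HahnSeries (gdual G) k) where
  carrier := {f | ∀ γ ∈ f.support, γ < (0 : gdual G)}
  zero_mem' := by intro γ hγ; rw [HahnSeries.support_zero] at hγ; exact absurd hγ (Set.notMem_empty γ)
  add_mem' := by
    intro a b ha hb γ hγ
    rcases HahnSeries.support_add_subset a b hγ with h | h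
    exacts [ha γ h, hb γ h]
  neg_mem' := by
    intro a ha γ hγ
    rw [HahnSeries.support_neg] at hγ
    exact ha γ hγ

theorem mem_largeSeries {f : HahnSeries (gdual G) k} :
    f ∈ largeSeries k G ↔ ∀ γ ∈ f.support, γ < (0 : gdual G) := Iff.rfl

/-- `log : (k^{>0}, ·) → (k, +)` is an order-preserving group embedding. -/
structure IsResidueLog (lg : k → k) : Prop where
  map_mul : ∀ a b : k, 0 < a → 0 < b → lg (a * b) = lg a + lg b
  strictMonoOn : StrictMonoOn lg (Set.Ioi 0)

/-- A prelogarithmic section of `k((G))`: an order-preserving group embedding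
`l : (G, ·) → (k((G^{>1})), +)`. -/
structure IsPrelogSection (l : G → HahnSeries (gdual G) k) : Prop where
  supp_large : ∀ g : G, l g ∈ largeSeries k G
  map_mul : ∀ g h : G, l (g * h) = l g + l h
  strictMono : StrictMono l

/-- The prelogarithm associated to a prelogarithmic section `l` and a logarithm `lg` on the
residue field: `L(g·a·(1+ε)) = l(g) + log(a) + Σ (-1)^(i-1) ε^i/i`. -/
def prelogL (lg : k → k) (l : G → HahnSeries (gdual G) k)
    (α : HahnSeries (gdual G) k) : HahnSeries (gdual G) k :=
  l (toG α.order) + HahnSeries.C (lg α.leadingCoeff) +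
    logOneUnit ((HahnSeries.single α.order α.leadingCoeff)⁻¹ * α - 1)

/-- The group of exponentials `G^# = e[k((G^{>1}))]`, a multiplicative copy of the ordered
additive group `k((G^{>1}))`. The element `e(α)` is `Multiplicative.ofAdd ⟨α, _⟩`. -/
abbrev Gsharp (k : Type*) [Field k] [LinearOrder k] [IsStrictOrderedRing k] (G : Type*) [CommGroup G] [LinearOrder G] [IsOrderedMonoid G] :
    Type _ := Multiplicative ↥(largeSeries k G)

/-- The embedding `ι : G → G^#`, `ι(g) := e(l(g))`. -/
def iotaSharp (l : G → HahnSeries (gdual G) k) (hl : ∀ g, l g ∈ largeSeries k G) (g : G) :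
    Gsharp k G :=
  Multiplicative.ofAdd (⟨l g, hl g⟩ : ↥(largeSeries k G))

/-- The prelogarithmic section `l^#` of `k((G^#))`: `l^#(e(α)) := ι(α)`, where
`ι : k((G)) → k((G^#))` is the canonical extension of `ι : G → G^#`. -/
def lsharpFun (l : G → HahnSeries (gdual G) k) (hl : ∀ g, l g ∈ largeSeries k G)
    (x : Gsharp k G) : HahnSeries (gdual (Gsharp k G)) k :=
  extMap (iotaSharp l hl) ((Multiplicative.toAdd x : ↥(largeSeries k G)) : HahnSeries (gdual G) k)

/-- The induced map `ψ^# : G₁^# → G₂^#`, `ψ^#(e(α)) := e(ψ(α))` (junk value `1` if the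
canonical extension of `ψ` does not map `k((G₁^{>1}))` into `k((G₂^{>1}))`). -/
def psiSharp {k : Type*} [Field k] [LinearOrder k] [IsStrictOrderedRing k] {G₁ G₂ : Type*} [CommGroup G₁] [LinearOrder G₁] [IsOrderedMonoid G₁]
    [CommGroup G₂] [LinearOrder G₂] [IsOrderedMonoid G₂] (ψ : G₁ → G₂) (x : Gsharp k G₁) : Gsharp k G₂ :=
  if h : ∀ f ∈ largeSeries k G₁, extMap ψ f ∈ largeSeries k G₂ then
    Multiplicative.ofAdd
      (⟨extMap ψ ((Multiplicative.toAdd x : ↥(largeSeries k G₁)) : HahnSeries (gdual G₁) k),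
        h _ (Multiplicative.toAdd x).2⟩ : ↥(largeSeries k G₂))
  else 1

/-- Condition (†) for subgroups `U ⊆ H` of `G`:
`l(H) < |f|` for every nonzero `f ∈ k((H^{>U}))`. -/
def CondDagger (l : G → HahnSeries (gdual G) k) (U H : Subgroup G) : Prop :=
  ∀ h ∈ H, ∀ f : HahnSeries (gdual G) k, f ≠ 0 →
    (∀ γ ∈ f.support, toG γ ∈ H ∧ ∀ u ∈ U, u < toG γ) → l h < |f|

/-- The growth axiom for a subgroup `H` of `G`:
`l(H) < |f|` for every nonzero `f ∈ k((H^{>1}))`. -/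
def GrowthAxiom (l : G → HahnSeries (gdual G) k) (H : Subgroup G) : Prop :=
  CondDagger l (⊥ : Subgroup G) H

theorem mem_large_of_gt {f : HahnSeries (gdual G) k} {U H : Subgroup G}
    (hf : ∀ γ ∈ f.support, toG γ ∈ H ∧ ∀ u ∈ U, u < toG γ) : f ∈ largeSeries k G :=
  fun γ hγ => show (1 : G) < toG γ from (hf γ hγ).2 1 U.one_mem

/-- The set `H^{#,U} = ι(H)·e[k((H^{>U}))] ⊆ G^#`. -/
def sharpProdSet (l : G → HahnSeries (gdual G) k) (hl : ∀ g, l g ∈ largeSeries k G)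
    (U H : Subgroup G) : Set (Gsharp k G) :=
  {x | ∃ h ∈ H, ∃ f : HahnSeries (gdual G) k,
    ∃ hf : ∀ γ ∈ f.support, toG γ ∈ H ∧ ∀ u ∈ U, u < toG γ,
    x = iotaSharp l hl h *
      Multiplicative.ofAdd (⟨f, mem_large_of_gt hf⟩ : ↥(largeSeries k G))}

end Series

section Hahn

variable (k : Type*) [Field k] [LinearOrder k] [IsStrictOrderedRing k] {Γ : Type*} [LinearOrder Γ]

/-- The Hahn group `Γ^k` of formal products `∏_γ x_γ^(g γ)` with anti well-ordered support,
ordered anti-lexicographically, realized as the multiplicative copy of the additive group of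
Hahn series over `Γᵒᵈ` with coefficients in `k`. -/
abbrev HahnGroup (Γ : Type*) [LinearOrder Γ] (k : Type*) [Field k] [LinearOrder k] [IsStrictOrderedRing k] : Type _ :=
  Multiplicative (HahnSeries Γᵒᵈ k)

/-- The monomial `x_γ` in the Hahn group `Γ^k`. -/
def xMon (γ : Γ) : HahnGroup Γ k :=
  Multiplicative.ofAdd (HahnSeries.single (OrderDual.toDual γ) (1 : k))

/-- The prelogarithmic section `l_σ` on `k((Γ^k))` induced by `σ : Γ → Γ`:
`l_σ(∏_γ x_γ^(g γ)) := Σ_γ (g γ)·x_(σ γ)` (junk value `0` if `σ` is not strictly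
order-preserving). -/
def sigmaSection (σ : Γ → Γ) :
    HahnGroup Γ k → HahnSeries (gdual (HahnGroup Γ k)) k :=
  if hσ : StrictMono σ then fun g =>
    HahnSeries.embDomain
      (OrderEmbedding.ofStrictMono
        (fun γ : Γᵒᵈ => toGd (xMon k (σ (OrderDual.ofDual γ))))
        (fun a b hab =>
          show toGd (xMon k (σ (OrderDual.ofDual a))) < toGd (xMon k (σ (OrderDual.ofDual b)))
          from hahn_single_lt_single
            (show OrderDual.toDual (σ (OrderDual.ofDual a)) <
                OrderDual.toDual (σ (OrderDual.ofDual b)) from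
              hσ (show OrderDual.ofDual b < OrderDual.ofDual a from hab))))
      (Multiplicative.toAdd g)
  else fun _ => 0

/-- The lift `ψ_σ : Γ^k → Γ^k` of `σ : Γ → Γ`, `ψ_σ(∏_γ x_γ^(g γ)) := ∏_γ x_(σ γ)^(g γ)`
(junk value `id` if `σ` is not strictly order-preserving). -/
def sigmaAuto (σ : Γ → Γ) : HahnGroup Γ k → HahnGroup Γ k :=
  if hσ : StrictMono σ then fun g =>
    Multiplicative.ofAdd
      (HahnSeries.embDomain
        (OrderEmbedding.ofStrictMono
          (fun γ : Γᵒᵈ => OrderDual.toDual (σ (OrderDual.ofDual γ)))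
          (fun a b hab =>
            show OrderDual.toDual (σ (OrderDual.ofDual a)) <
                OrderDual.toDual (σ (OrderDual.ofDual b)) from
              hσ (show OrderDual.ofDual b < OrderDual.ofDual a from hab)))
        (Multiplicative.toAdd g))
  else id

end Hahn

section PsiSharpAux

variable {k : Type*} [Field k] [LinearOrder k] [IsStrictOrderedRing k]

lemma embDomain_support' {Γ' Γ'' : Type*} [LinearOrder Γ'] [LinearOrder Γ'']
    (e : Γ' ↪o Γ'') (x : HahnSeries Γ' k) :
    (HahnSeries.embDomain e x).support = ⇑e '' x.support := by
  apply Set.Subset.antisymm HahnSeries.support_embDomain_subset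
  rintro _ ⟨a, ha, rfl⟩
  rw [HahnSeries.mem_support, HahnSeries.embDomain_coeff]
  exact ha

lemma embDomain_leadingCoeff' {Γ' Γ'' : Type*} [LinearOrder Γ'] [LinearOrder Γ'']
    (e : Γ' ↪o Γ'') (x : HahnSeries Γ' k) :
    (HahnSeries.embDomain e x).leadingCoeff = x.leadingCoeff := by
  by_cases h : x = 0
  · simp [h, HahnSeries.embDomain_zero]
  · have hne : HahnSeries.embDomain e x ≠ 0 := by
      intro h0
      exact h (HahnSeries.embDomain_injective (by rw [h0, HahnSeries.embDomain_zero]))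
    rw [HahnSeries.leadingCoeff_of_ne_zero h, HahnSeries.leadingCoeff_of_ne_zero hne,
      HahnSeries.untop_orderTop_of_ne_zero h, HahnSeries.untop_orderTop_of_ne_zero hne]
    set m := x.isWF_support.min (HahnSeries.support_nonempty_iff.2 h) with hm
    have hmin : (HahnSeries.embDomain e x).isWF_support.min
        (HahnSeries.support_nonempty_iff.2 hne) = e m := by
      apply le_antisymm
      · apply Set.IsWF.min_le
        rw [embDomain_support']
        exact ⟨m, x.isWF_support.min_mem _, rfl⟩
      · have hmem := (HahnSeries.embDomain e x).isWF_support.min_mem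
          (HahnSeries.support_nonempty_iff.2 hne)
        have hmem' : (HahnSeries.embDomain e x).isWF_support.min
            (HahnSeries.support_nonempty_iff.2 hne) ∈ ⇑e '' x.support := by
          rw [← embDomain_support']; exact hmem
        obtain ⟨a, ha, heq⟩ := hmem'
        rw [← heq]
        exact e.monotone (Set.IsWF.min_le _ _ ha)
    rw [hmin, HahnSeries.embDomain_coeff]

lemma embDomain_lt' {Γ' Γ'' : Type*} [LinearOrder Γ'] [LinearOrder Γ'']
    (e : Γ' ↪o Γ'') {x y : HahnSeries Γ' k} (hxy : x < y) :
    HahnSeries.embDomain e x < HahnSeries.embDomain e y := by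
  rw [hahn_lt_iff] at hxy ⊢
  have hsub : HahnSeries.embDomain e y - HahnSeries.embDomain e x
      = HahnSeries.embDomain e (y - x) := by
    have := HahnSeries.embDomain_add e (y - x) x
    rw [sub_add_cancel] at this
    rw [this]; abel
  rw [hsub, embDomain_leadingCoeff']
  exact hxy

variable {G₁ G₂ G₃ : Type*} [CommGroup G₁] [LinearOrder G₁] [IsOrderedMonoid G₁]
  [CommGroup G₂] [LinearOrder G₂] [IsOrderedMonoid G₂] [CommGroup G₃] [LinearOrder G₃] [IsOrderedMonoid G₃]

lemma extMap_add' {ψ : G₁ → G₂} (hψ : StrictMono ψ) (x y : HahnSeries (gdual G₁) k) :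
    extMap ψ (x + y) = extMap ψ x + extMap ψ y := by
  rw [extMap, dif_pos hψ]
  exact HahnSeries.embDomain_add _ x y

lemma extMap_strictMono {ψ : G₁ → G₂} (hψ : StrictMono ψ) :
    StrictMono (extMap (k := k) ψ) := by
  intro x y hxy
  rw [extMap, dif_pos hψ]
  exact embDomain_lt' _ hxy

lemma extMap_mem_large {ψ : G₁ → G₂} (hψ : StrictMono ψ) (hψ1 : ψ 1 = 1)
    {f : HahnSeries (gdual G₁) k} (hf : f ∈ largeSeries k G₁) :
    extMap ψ f ∈ largeSeries k G₂ := by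
  rw [extMap, dif_pos hψ]
  intro γ hγ
  rw [embDomain_support'] at hγ
  obtain ⟨δ, hδ, rfl⟩ := hγ
  have h1 : (1 : G₁) < toG δ := hf δ hδ
  have h2 : (1 : G₂) < ψ (toG δ) := hψ1 ▸ hψ h1
  exact h2

lemma extMap_comp' {ψ : G₁ → G₂} {φ : G₂ → G₃} (hψ : StrictMono ψ) (hφ : StrictMono φ)
    (f : HahnSeries (gdual G₁) k) :
    extMap φ (extMap (k := k) ψ f) = extMap (φ ∘ ψ) f := by
  have hc : StrictMono (φ ∘ ψ) := hφ.comp hψ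
  rw [extMap, extMap, extMap, dif_pos hψ, dif_pos hφ, dif_pos hc]
  set E₁ := OrderEmbedding.ofStrictMono (fun γ : gdual G₂ => toGd (φ (toG γ)))
    (fun a b hab => show toGd (φ (toG a)) < toGd (φ (toG b)) from
      hφ (show toG b < toG a from hab)) with hE₁
  set E₂ := OrderEmbedding.ofStrictMono (fun γ : gdual G₁ => toGd (ψ (toG γ)))
    (fun a b hab => show toGd (ψ (toG a)) < toGd (ψ (toG b)) from
      hψ (show toG b < toG a from hab)) with hE₂
  set E₃ := OrderEmbedding.ofStrictMono (fun γ : gdual G₁ => toGd ((φ ∘ ψ) (toG γ)))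
    (fun a b hab => show toGd ((φ ∘ ψ) (toG a)) < toGd ((φ ∘ ψ) (toG b)) from
      hc (show toG b < toG a from hab)) with hE₃
  ext γ
  by_cases hγ : ∃ δ : gdual G₁, E₃ δ = γ
  · obtain ⟨δ, rfl⟩ := hγ
    calc (HahnSeries.embDomain E₁ (HahnSeries.embDomain E₂ f)).coeff (E₃ δ)
        = (HahnSeries.embDomain E₂ f).coeff (E₂ δ) :=
          (HahnSeries.embDomain_coeff (f := E₁) (a := E₂ δ))
      _ = f.coeff δ := HahnSeries.embDomain_coeff
      _ = (HahnSeries.embDomain E₃ f).coeff (E₃ δ) := HahnSeries.embDomain_coeff.symm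
  · have h3 : γ ∉ Set.range ⇑E₃ := fun ⟨δ, hδ⟩ => hγ ⟨δ, hδ⟩
    rw [HahnSeries.embDomain_notin_range h3]
    by_cases h1 : γ ∈ Set.range ⇑E₁
    · obtain ⟨β, rfl⟩ := h1
      rw [HahnSeries.embDomain_coeff]
      have h2 : β ∉ Set.range ⇑E₂ := by
        rintro ⟨δ, rfl⟩
        exact hγ ⟨δ, rfl⟩
      exact HahnSeries.embDomain_notin_range h2
    · exact HahnSeries.embDomain_notin_range h1

lemma iotaSharp_strictMono {G : Type*} [CommGroup G] [LinearOrder G] [IsOrderedMonoid G]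
    {l : G → HahnSeries (gdual G) k} (hl : IsPrelogSection l) :
    StrictMono (iotaSharp l hl.supp_large) := fun a b hab =>
  show (⟨l a, hl.supp_large a⟩ : ↥(largeSeries k G)) < ⟨l b, hl.supp_large b⟩ from
    Subtype.mk_lt_mk.2 (hl.strictMono hab)

end PsiSharpAux

/-- Let `ψ` be a morphism from `(k((G₁)),l₁)` to `(k((G₂)),l₂)` and let
`G₁^#, G₂^#` be the exponential extension groups with embeddings `ι₁, ι₂` and sections
`l₁^#, l₂^#`.  The map `ψ^# : G₁^# → G₂^#`, `ψ^#(e(α)) := e(ψ(α))` (= `psiSharp ψ`), is an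
order-preserving group embedding which extends `ψ` (`ψ^# ∘ ι₁ = ι₂ ∘ ψ`), and `ψ^#` is a
morphism from `(k((G₁^#)),l₁^#)` to `(k((G₂^#)),l₂^#)`: the canonical extension of `ψ^#`
satisfies `(extMap ψ^#) ∘ l₁^# = l₂^# ∘ ψ^#` on `G₁^#`. -/
theorem psiSharp_is_morphism {k : Type*} [Field k] [LinearOrder k] [IsStrictOrderedRing k]
    {G₁ G₂ : Type*} [CommGroup G₁] [LinearOrder G₁] [IsOrderedMonoid G₁] [CommGroup G₂] [LinearOrder G₂] [IsOrderedMonoid G₂]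
    (l₁ : G₁ → HahnSeries (gdual G₁) k) (hl₁ : IsPrelogSection l₁)
    (l₂ : G₂ → HahnSeries (gdual G₂) k) (hl₂ : IsPrelogSection l₂)
    (ψ : G₁ →* G₂) (hψ : StrictMono ψ)
    (hcomm : ∀ g : G₁, extMap (k := k) (⇑ψ) (l₁ g) = l₂ (ψ g)) :
    (∀ x y : Gsharp k G₁, psiSharp (⇑ψ) (x * y) = psiSharp (⇑ψ) x * psiSharp (⇑ψ) y) ∧
    StrictMono (psiSharp (k := k) (⇑ψ)) ∧
    (∀ g : G₁, psiSharp (⇑ψ) (iotaSharp l₁ hl₁.supp_large g) =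
      iotaSharp l₂ hl₂.supp_large (ψ g)) ∧
    (∀ x : Gsharp k G₁,
      extMap (psiSharp (⇑ψ)) (lsharpFun l₁ hl₁.supp_large x) =
        lsharpFun l₂ hl₂.supp_large (psiSharp (⇑ψ) x)) := by
  have hψ1 : ψ (1 : G₁) = 1 := map_one ψ
  have hcond : ∀ f ∈ largeSeries k G₁, extMap (k := k) (⇑ψ) f ∈ largeSeries k G₂ :=
    fun f hf => extMap_mem_large hψ hψ1 hf
  have hmul : ∀ x y : Gsharp k G₁,
      psiSharp (⇑ψ) (x * y) = psiSharp (⇑ψ) x * psiSharp (⇑ψ) y := by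
    intro x y
    simp only [psiSharp, dif_pos hcond]
    rw [← ofAdd_add]
    congr 1
    apply Subtype.ext
    show extMap (⇑ψ) ((Multiplicative.toAdd (x * y) : ↥(largeSeries k G₁)) :
        HahnSeries (gdual G₁) k) = _
    rw [toAdd_mul]
    push_cast
    exact extMap_add' hψ _ _
  have hsm : StrictMono (psiSharp (k := k) (⇑ψ)) := by
    intro x y hxy
    simp only [psiSharp, dif_pos hcond]
    have hlt : ((Multiplicative.toAdd x : ↥(largeSeries k G₁)) : HahnSeries (gdual G₁) k) <
        ((Multiplicative.toAdd y : ↥(largeSeries k G₁)) : HahnSeries (gdual G₁) k) := hxy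
    exact extMap_strictMono hψ hlt
  have hext : ∀ g : G₁, psiSharp (⇑ψ) (iotaSharp l₁ hl₁.supp_large g) =
      iotaSharp l₂ hl₂.supp_large (ψ g) := by
    intro g
    simp only [psiSharp, dif_pos hcond, iotaSharp]
    congr 1
    apply Subtype.ext
    show extMap (⇑ψ) (l₁ g) = l₂ (ψ g)
    exact hcomm g
  refine ⟨hmul, hsm, hext, ?_⟩
  intro x
  have hiota₁ : StrictMono (iotaSharp l₁ hl₁.supp_large) := iotaSharp_strictMono hl₁
  have hiota₂ : StrictMono (iotaSharp l₂ hl₂.supp_large) := iotaSharp_strictMono hl₂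
  rw [lsharpFun, extMap_comp' hiota₁ hsm]
  have hfun : (psiSharp (k := k) (⇑ψ)) ∘ (iotaSharp l₁ hl₁.supp_large)
      = (iotaSharp l₂ hl₂.supp_large) ∘ ⇑ψ := funext hext
  rw [hfun, ← extMap_comp' hψ hiota₂, lsharpFun]
  congr 1
  show extMap (⇑ψ) ((Multiplicative.toAdd x : ↥(largeSeries k G₁)) : HahnSeries (gdual G₁) k)
      = ((Multiplicative.toAdd (psiSharp (⇑ψ) x) : ↥(largeSeries k G₂)) :
        HahnSeries (gdual G₂) k)
  simp only [psiSharp, dif_pos hcond, toAdd_ofAdd]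

end
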